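/- Let X, E₁ : [0, T*] → [0,∞) be continuous with E₁(t) ≤ X(t). Suppose X(t) ≤ 2M₀ on [0,T*], E₁(0) < δ with δ ≤ min{δ₁, δ₂}, and the barrier inequalities hold: (i) E₁(T) + ∫₀ᵀ k(E₁(t),X(t)) dt ≤ C₄E₁(0) for all T ≤ T*, where k(x,y) = C₃x − C₄∑ⱼ x^{γⱼ}y^{τⱼ} with γⱼ > 1, τⱼ > 0; (ii) the unique positive root a of C₃ − C₄∑ⱼ x^{γⱼ−1}(2M₀)^{τⱼ} = C₃/2 satisfies δ₂ = a/(2C₄). Then k(E₁(t),X(t)) ≥ (C₃/2)E₁(t) for all t ∈ [0,T*], i.e., the set {t : k(E₁(s),X(s)) ≥ (C₃/2)E₁(s) for all s ≤ t} is all of [0,T*] (continuation/barrier argument: T** = T*). -/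

import Mathlib

open MeasureTheory
open scoped BigOperators

/-- continuation/barrier argument (`T** = T*`).  Under the barrier
inequality (i), the smallness `E₁(0) < δ ≤ min{δ₁, δ₂}` (with `δ₁` the root of
`C₄ ∑ⱼ γⱼ x^{γⱼ−1}(2M₀)^{τⱼ} = C₃/2`, `a` the root of
`C₄ ∑ⱼ x^{γⱼ−1}(2M₀)^{τⱼ} = C₃/2`, and `δ₂ = a/(2C₄)`), and the bound
`X ≤ 2M₀` on `[0,T*]`, one has `k(E₁(t), X(t)) ≥ (C₃/2) E₁(t)` on all of
`[0,T*]`, where `k(x,y) = C₃x − C₄ ∑ⱼ x^{γⱼ} y^{τⱼ}`. -/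
theorem stmt19 (N : ℕ) (C₃ C₄ M₀ Tstar : ℝ)
    (hC₃ : 0 < C₃) (hC₄ : 0 < C₄) (hM₀ : 0 < M₀) (hTs : 0 ≤ Tstar)
    (γ τ : Fin N → ℝ) (hγ : ∀ j, 1 < γ j) (hτ : ∀ j, 0 < τ j)
    (E₁ X : ℝ → ℝ)
    (hEc : ContinuousOn E₁ (Set.Icc 0 Tstar))
    (hXc : ContinuousOn X (Set.Icc 0 Tstar))
    (hEnn : ∀ t ∈ Set.Icc (0:ℝ) Tstar, 0 ≤ E₁ t)
    (hEX : ∀ t ∈ Set.Icc (0:ℝ) Tstar, E₁ t ≤ X t)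
    (hXnn : ∀ t ∈ Set.Icc (0:ℝ) Tstar, 0 ≤ X t)
    (hXb : ∀ t ∈ Set.Icc (0:ℝ) Tstar, X t ≤ 2 * M₀)
    (k : ℝ → ℝ → ℝ)
    (hk : ∀ x y : ℝ, k x y = C₃ * x - C₄ * ∑ j, x ^ (γ j) * y ^ (τ j))
    (δ₁ : ℝ) (hδ₁pos : 0 < δ₁)
    (hδ₁ : C₄ * ∑ j, γ j * δ₁ ^ (γ j - 1) * (2 * M₀) ^ (τ j) = C₃ / 2)
    (a : ℝ) (hapos : 0 < a)
    (ha : C₄ * ∑ j, a ^ (γ j - 1) * (2 * M₀) ^ (τ j) = C₃ / 2)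
    (δ : ℝ) (hδ : δ ≤ min δ₁ (a / (2 * C₄)))
    (hE0 : E₁ 0 < δ)
    (hbar : ∀ T ∈ Set.Icc (0:ℝ) Tstar,
      E₁ T + ∫ t in (0:ℝ)..T, k (E₁ t) (X t) ≤ C₄ * E₁ 0) :
    ∀ t ∈ Set.Icc (0:ℝ) Tstar, (C₃ / 2) * E₁ t ≤ k (E₁ t) (X t) := by

  -- Key pointwise inequality: if 0 ≤ x ≤ a and 0 ≤ y ≤ 2M₀ then
  -- C₄ ∑ x^γⱼ y^τⱼ ≤ (C₃/2) x.
  have key : ∀ x y : ℝ, 0 ≤ x → x ≤ a → 0 ≤ y → y ≤ 2 * M₀ →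
      C₄ * ∑ j, x ^ (γ j) * y ^ (τ j) ≤ C₃ / 2 * x := by
    intro x y hx hxa hy hyM
    have hterm : ∀ j, x ^ (γ j) * y ^ (τ j)
        ≤ x * (a ^ (γ j - 1) * (2 * M₀) ^ (τ j)) := by
      intro j
      have hγ1 : (0:ℝ) < γ j - 1 := by linarith [hγ j]
      have h1 : x ^ (γ j) = x * x ^ (γ j - 1) := by
        rcases eq_or_lt_of_le hx with h0 | h0
        · rw [← h0, Real.zero_rpow (by linarith [hγ j] : γ j ≠ 0),
            Real.zero_rpow (ne_of_gt hγ1), mul_zero]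
        · have h2 : x ^ ((1:ℝ) + (γ j - 1)) = x ^ (1:ℝ) * x ^ (γ j - 1) :=
            Real.rpow_add h0 1 (γ j - 1)
          rw [Real.rpow_one] at h2
          rw [← h2]
          congr 1
          ring
      rw [h1, mul_assoc]
      refine mul_le_mul_of_nonneg_left ?_ hx
      refine mul_le_mul ?_ ?_ (Real.rpow_nonneg hy _) (Real.rpow_nonneg (by linarith) _)
      · exact Real.rpow_le_rpow hx hxa (le_of_lt hγ1)
      · exact Real.rpow_le_rpow hy hyM (le_of_lt (hτ j))
    calc C₄ * ∑ j, x ^ (γ j) * y ^ (τ j)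
        ≤ C₄ * ∑ j, x * (a ^ (γ j - 1) * (2 * M₀) ^ (τ j)) := by
          refine mul_le_mul_of_nonneg_left ?_ hC₄.le
          exact Finset.sum_le_sum fun j _ => hterm j
      _ = x * (C₄ * ∑ j, a ^ (γ j - 1) * (2 * M₀) ^ (τ j)) := by
          rw [← Finset.mul_sum]; ring
      _ = C₃ / 2 * x := by rw [ha]; ring
  -- bound C₄ E₁(0) < a/2
  have hCδ : C₄ * E₁ 0 < a / 2 := by
    have h1 : C₄ * E₁ 0 < C₄ * δ := by
      exact mul_lt_mul_of_pos_left hE0 hC₄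
    have h2 : δ ≤ a / (2 * C₄) := le_trans hδ (min_le_right _ _)
    have h3 : C₄ * δ ≤ C₄ * (a / (2 * C₄)) := mul_le_mul_of_nonneg_left h2 hC₄.le
    have h4 : C₄ * (a / (2 * C₄)) = a / 2 := by field_simp
    linarith
  have h0mem : (0:ℝ) ∈ Set.Icc (0:ℝ) Tstar := ⟨le_refl 0, hTs⟩
  have hE0a : E₁ 0 < a := by
    have := hbar 0 h0mem
    rw [intervalIntegral.integral_same] at this
    linarith
  -- main claim: E₁ ≤ a on [0, Tstar]
  have hEa : ∀ t ∈ Set.Icc (0:ℝ) Tstar, E₁ t ≤ a := by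
    by_contra hcon
    push_neg at hcon
    obtain ⟨t₁, ht₁, ht₁a⟩ := hcon
    set F : Set ℝ := {t ∈ Set.Icc (0:ℝ) Tstar | a ≤ E₁ t} with hF
    have hFne : F.Nonempty := ⟨t₁, ht₁, le_of_lt ht₁a⟩
    have hFclosed : IsClosed F := by
      have : F = Set.Icc (0:ℝ) Tstar ∩ E₁ ⁻¹' Set.Ici a := by
        ext s; simp [hF, Set.mem_setOf_eq, Set.mem_Ici, and_comm]
      rw [this]
      exact hEc.preimage_isClosed_of_isClosed isClosed_Icc isClosed_Ici
    have hFbdd : BddBelow F := ⟨0, fun s hs => hs.1.1⟩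
    set t₀ := sInf F with ht₀def
    have ht₀F : t₀ ∈ F := hFclosed.csInf_mem hFne hFbdd
    have ht₀Icc : t₀ ∈ Set.Icc (0:ℝ) Tstar := ht₀F.1
    have ht₀a : a ≤ E₁ t₀ := ht₀F.2
    have ht₀pos : 0 < t₀ := by
      rcases lt_or_eq_of_le ht₀Icc.1 with h | h
      · exact h
      · exfalso; rw [← h] at ht₀a; linarith
    have hlt : ∀ s ∈ Set.Ico (0:ℝ) t₀, E₁ s < a := by
      intro s hs
      by_contra hsa
      push_neg at hsa
      have : s ∈ F := ⟨⟨hs.1, le_trans hs.2.le ht₀Icc.2⟩, hsa⟩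
      exact absurd (csInf_le hFbdd this) (not_le.mpr hs.2)
    -- E₁ t₀ ≤ a by continuity from the left
    have hEt₀le : E₁ t₀ ≤ a := by
      have hsub : Set.Ico (0:ℝ) t₀ ⊆ Set.Icc (0:ℝ) Tstar := fun s hs =>
        ⟨hs.1, le_trans hs.2.le ht₀Icc.2⟩
      have hct : ContinuousWithinAt E₁ (Set.Ico (0:ℝ) t₀) t₀ :=
        (hEc t₀ ht₀Icc).mono hsub
      have hclos : t₀ ∈ closure (Set.Ico (0:ℝ) t₀) := by
        rw [closure_Ico (ne_of_lt ht₀pos)]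
        exact ⟨ht₀pos.le, le_refl _⟩
      haveI : (nhdsWithin t₀ (Set.Ico (0:ℝ) t₀)).NeBot :=
        mem_closure_iff_nhdsWithin_neBot.mp hclos
      exact le_of_tendsto hct
        (Filter.eventually_of_mem self_mem_nhdsWithin
          (fun s hs => (hlt s hs).le))
    have hintnn : (0:ℝ) ≤ ∫ t in (0:ℝ)..t₀, k (E₁ t) (X t) := by
      refine intervalIntegral.integral_nonneg ht₀pos.le ?_
      intro u hu
      have huIcc : u ∈ Set.Icc (0:ℝ) Tstar := ⟨hu.1, le_trans hu.2 ht₀Icc.2⟩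
      have hua : E₁ u ≤ a := by
        rcases lt_or_eq_of_le hu.2 with h | h
        · exact (hlt u ⟨hu.1, h⟩).le
        · rw [h]; exact hEt₀le
      have := key (E₁ u) (X u) (hEnn u huIcc) hua (hXnn u huIcc) (hXb u huIcc)
      rw [hk]
      nlinarith [hEnn u huIcc, hC₃.le]
    have := hbar t₀ ht₀Icc
    linarith
  -- conclude
  intro t ht
  rw [hk]
  have := key (E₁ t) (X t) (hEnn t ht) (hEa t ht) (hXnn t ht) (hXb t ht)
  linarith
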